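/- arXiv:1904.13211 — 7 statements merged into one kernel-verified Lean document; each statement's English description precedes it below -/
import Mathlib

section
/- Let U : X → (0,∞) be measurable. Assume: Φ[U](x) < ∞ for μ-almost every x; Ψ[U](y) < ∞ for ν-almost every y; μ({x : p(x,y) > 0}) > 0 for ν-almost every y; and μ({x : p(x,y) > 0 for all y ∈ Y}) > 0. Then the fixed point equation Φ[u] = u admits at most one positive solution up to a multiplicative constant: if u' and u'' are measurable functions with 0 < u' ≤ U, 0 < u'' ≤ U, Φ[u'] = u' everywhere and Φ[u''] = u'' everywhere, then there exists κ > 0 such that u'' = κ·u'. -/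
open MeasureTheory ENNReal Filter Topology
open scoped NNReal

noncomputable section

/-- `Ψ[u](y) = ∫_X p(x',y) u(x')⁻¹ dμ(x')`. -/
def fortetPsi {X Y : Type*} [MeasurableSpace X]
    (p : X → Y → ℝ≥0∞) (μ : Measure X) (u : X → ℝ≥0∞) (y : Y) : ℝ≥0∞ :=
  ∫⁻ x, p x y * (u x)⁻¹ ∂μ

/-- The Fortet mapping `Φ[u](x) = ∫_Y p(x,y) Ψ[u](y)⁻¹ dν(y)`. -/
def fortetPhi {X Y : Type*} [MeasurableSpace X] [MeasurableSpace Y]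
    (p : X → Y → ℝ≥0∞) (μ : Measure X) (ν : Measure Y) (u : X → ℝ≥0∞) (x : X) : ℝ≥0∞ :=
  ∫⁻ y, p x y * (fortetPsi p μ u y)⁻¹ ∂ν


private lemma ennreal_two_le_self_add_inv {t : ℝ≥0∞} (h0 : t ≠ 0) (ht : t ≠ ∞) :
    2 ≤ t + t⁻¹ := by
  lift t to ℝ≥0 using ht
  have h0' : t ≠ 0 := by exact_mod_cast h0
  rw [← ENNReal.coe_inv h0', ← ENNReal.coe_add]
  rw [show ((2:ℝ≥0∞)) = ((2:ℝ≥0) : ℝ≥0∞) by norm_cast, ENNReal.coe_le_coe,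
    ← NNReal.coe_le_coe]
  push_cast
  have htR : (0:ℝ) < (t:ℝ) := lt_of_le_of_ne (t.coe_nonneg) (by exact_mod_cast h0'.symm)
  have hinv : (t:ℝ) * (t:ℝ)⁻¹ = 1 := mul_inv_cancel₀ (ne_of_gt htR)
  nlinarith [sq_nonneg ((t:ℝ) - 1)]

private lemma ennreal_eq_one_of_add_inv_eq_two {t : ℝ≥0∞} (h0 : t ≠ 0) (ht : t ≠ ∞)
    (h : t + t⁻¹ = 2) : t = 1 := by
  lift t to ℝ≥0 using ht
  have h0' : t ≠ 0 := by exact_mod_cast h0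
  rw [← ENNReal.coe_inv h0', ← ENNReal.coe_add,
    show ((2:ℝ≥0∞)) = ((2:ℝ≥0) : ℝ≥0∞) by norm_cast] at h
  have h2 : t + t⁻¹ = 2 := by exact_mod_cast h
  have h3 : (t:ℝ) + (t:ℝ)⁻¹ = 2 := by
    have := congrArg (NNReal.toReal) h2
    push_cast at this
    exact this
  have htR : (0:ℝ) < (t:ℝ) := lt_of_le_of_ne (t.coe_nonneg) (by exact_mod_cast h0'.symm)
  have hinv : (t:ℝ) * (t:ℝ)⁻¹ = 1 := mul_inv_cancel₀ (ne_of_gt htR)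
  have : (t:ℝ) = 1 := by nlinarith [sq_nonneg ((t:ℝ) - 1)]
  have : (t:ℝ≥0) = 1 := by exact_mod_cast this
  exact_mod_cast this

private lemma ennreal_two_le_mul_inv {c d : ℝ≥0∞} (hc0 : c ≠ 0) (hc : c ≠ ∞)
    (hd0 : d ≠ 0) (hd : d ≠ ∞) : 2 ≤ c * d⁻¹ + d * c⁻¹ := by
  have ht0 : c * d⁻¹ ≠ 0 := by
    simp [mul_eq_zero, hc0, ENNReal.inv_ne_zero, hd]
  have htt : c * d⁻¹ ≠ ∞ := ENNReal.mul_ne_top hc (ENNReal.inv_ne_top.mpr hd0)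
  have hinv : (c * d⁻¹)⁻¹ = d * c⁻¹ := by
    rw [ENNReal.mul_inv (Or.inl hc0) (Or.inl hc), inv_inv, mul_comm]
  have := ennreal_two_le_self_add_inv ht0 htt
  rwa [hinv] at this

private lemma ennreal_eq_of_mul_inv_add {c d : ℝ≥0∞} (hc0 : c ≠ 0) (hc : c ≠ ∞)
    (hd0 : d ≠ 0) (hd : d ≠ ∞) (h : c * d⁻¹ + d * c⁻¹ = 2) : c = d := by
  have ht0 : c * d⁻¹ ≠ 0 := by
    simp [mul_eq_zero, hc0, ENNReal.inv_ne_zero, hd]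
  have htt : c * d⁻¹ ≠ ∞ := ENNReal.mul_ne_top hc (ENNReal.inv_ne_top.mpr hd0)
  have hinv : (c * d⁻¹)⁻¹ = d * c⁻¹ := by
    rw [ENNReal.mul_inv (Or.inl hc0) (Or.inl hc), inv_inv, mul_comm]
  have h1 : c * d⁻¹ = 1 := ennreal_eq_one_of_add_inv_eq_two ht0 htt (by rw [hinv]; exact h)
  calc c = c * d⁻¹ * d := by rw [mul_assoc, ENNReal.inv_mul_cancel hd0 hd, mul_one]
  _ = d := by rw [h1, one_mul]

section CS
variable {X : Type*} [MeasurableSpace X] (μ : Measure X) [SFinite μ]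
  (q φ : X → ℝ≥0∞)

private lemma cs_expand (hq : Measurable q) (hφ : Measurable φ) :
    ∫⁻ z, (q z.1 * q z.2) * (φ z.1 * (φ z.2)⁻¹ + φ z.2 * (φ z.1)⁻¹) ∂(μ.prod μ)
      = 2 * ((∫⁻ x, q x * φ x ∂μ) * (∫⁻ x, q x * (φ x)⁻¹ ∂μ)) := by
  have hqφ : Measurable fun x => q x * φ x := hq.mul hφ
  have hqφi : Measurable fun x => q x * (φ x)⁻¹ := hq.mul hφ.inv
  have hm1 : Measurable fun z : X × X => (q z.1 * φ z.1) * (q z.2 * (φ z.2)⁻¹) :=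
    ((hq.comp measurable_fst).mul (hφ.comp measurable_fst)).mul
      ((hq.comp measurable_snd).mul (hφ.comp measurable_snd).inv)
  have hgg : ∀ z : X × X, (q z.1 * q z.2) * (φ z.1 * (φ z.2)⁻¹ + φ z.2 * (φ z.1)⁻¹)
      = (q z.1 * φ z.1) * (q z.2 * (φ z.2)⁻¹) + (q z.1 * (φ z.1)⁻¹) * (q z.2 * φ z.2) := by
    intro z; ring
  rw [lintegral_congr hgg, lintegral_add_left hm1,
    lintegral_prod_mul hqφ.aemeasurable hqφi.aemeasurable,
    lintegral_prod_mul hqφi.aemeasurable hqφ.aemeasurable]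
  ring

private lemma cs_diag (hq : Measurable q) :
    ∫⁻ z, 2 * (q z.1 * q z.2) ∂(μ.prod μ) = 2 * ((∫⁻ x, q x ∂μ) * (∫⁻ x, q x ∂μ)) := by
  have hm : Measurable fun z : X × X => q z.1 * q z.2 :=
    (hq.comp measurable_fst).mul (hq.comp measurable_snd)
  rw [lintegral_const_mul _ hm, lintegral_prod_mul hq.aemeasurable hq.aemeasurable]

private lemma cs_ineq (hq : Measurable q) (hφ : Measurable φ)
    (hφ0 : ∀ x, φ x ≠ 0) (hφt : ∀ x, φ x ≠ ∞) :
    (∫⁻ x, q x ∂μ) * (∫⁻ x, q x ∂μ) ≤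
      (∫⁻ x, q x * φ x ∂μ) * (∫⁻ x, q x * (φ x)⁻¹ ∂μ) := by
  rw [← ENNReal.mul_le_mul_iff_right (a := 2) two_ne_zero ofNat_ne_top]
  calc 2 * ((∫⁻ x, q x ∂μ) * (∫⁻ x, q x ∂μ))
      = ∫⁻ z, 2 * (q z.1 * q z.2) ∂(μ.prod μ) := (cs_diag μ q hq).symm
    _ ≤ ∫⁻ z, (q z.1 * q z.2) * (φ z.1 * (φ z.2)⁻¹ + φ z.2 * (φ z.1)⁻¹) ∂(μ.prod μ) := by
        refine lintegral_mono fun z => ?_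
        have h2 : 2 ≤ φ z.1 * (φ z.2)⁻¹ + φ z.2 * (φ z.1)⁻¹ :=
          ennreal_two_le_mul_inv (hφ0 z.1) (hφt z.1) (hφ0 z.2) (hφt z.2)
        calc 2 * (q z.1 * q z.2) = (q z.1 * q z.2) * 2 := by ring
          _ ≤ (q z.1 * q z.2) * (φ z.1 * (φ z.2)⁻¹ + φ z.2 * (φ z.1)⁻¹) :=
              mul_le_mul_right h2 _
    _ = 2 * ((∫⁻ x, q x * φ x ∂μ) * (∫⁻ x, q x * (φ x)⁻¹ ∂μ)) := cs_expand μ q φ hq hφ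

private lemma cs_eq (hq : Measurable q) (hφ : Measurable φ)
    (hφ0 : ∀ x, φ x ≠ 0) (hφt : ∀ x, φ x ≠ ∞) (hqt : ∀ x, q x ≠ ∞)
    (hfin : (∫⁻ x, q x ∂μ) ≠ ∞)
    (hle : (∫⁻ x, q x * φ x ∂μ) * (∫⁻ x, q x * (φ x)⁻¹ ∂μ) ≤
      (∫⁻ x, q x ∂μ) * (∫⁻ x, q x ∂μ)) :
    ∀ᵐ z ∂(μ.prod μ), q z.1 = 0 ∨ q z.2 = 0 ∨ φ z.1 = φ z.2 := by
  have hg_meas : Measurable fun z : X × X =>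
      (q z.1 * q z.2) * (φ z.1 * (φ z.2)⁻¹ + φ z.2 * (φ z.1)⁻¹) := by
    apply Measurable.mul
    · exact (hq.comp measurable_fst).mul (hq.comp measurable_snd)
    · exact ((hφ.comp measurable_fst).mul (hφ.comp measurable_snd).inv).add
        ((hφ.comp measurable_snd).mul (hφ.comp measurable_fst).inv)
  have hfg : ∀ z : X × X, 2 * (q z.1 * q z.2)
      ≤ (q z.1 * q z.2) * (φ z.1 * (φ z.2)⁻¹ + φ z.2 * (φ z.1)⁻¹) := by
    intro z
    have h2 : 2 ≤ φ z.1 * (φ z.2)⁻¹ + φ z.2 * (φ z.1)⁻¹ :=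
      ennreal_two_le_mul_inv (hφ0 z.1) (hφt z.1) (hφ0 z.2) (hφt z.2)
    calc 2 * (q z.1 * q z.2) = (q z.1 * q z.2) * 2 := by ring
      _ ≤ _ := mul_le_mul_right h2 _
  have hff : ∫⁻ z, 2 * (q z.1 * q z.2) ∂(μ.prod μ) ≠ ∞ := by
    rw [cs_diag μ q hq]
    exact ENNReal.mul_ne_top ofNat_ne_top (ENNReal.mul_ne_top hfin hfin)
  have hgf : ∫⁻ z, (q z.1 * q z.2) * (φ z.1 * (φ z.2)⁻¹ + φ z.2 * (φ z.1)⁻¹) ∂(μ.prod μ)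
      ≤ ∫⁻ z, 2 * (q z.1 * q z.2) ∂(μ.prod μ) := by
    rw [cs_diag μ q hq, cs_expand μ q φ hq hφ]
    exact mul_le_mul_right hle _
  have heq := ae_eq_of_ae_le_of_lintegral_le (ae_of_all _ hfg) hff hg_meas.aemeasurable hgf
  filter_upwards [heq] with z hz
  by_cases h1 : q z.1 = 0
  · exact Or.inl h1
  by_cases h2 : q z.2 = 0
  · exact Or.inr (Or.inl h2)
  refine Or.inr (Or.inr ?_)
  have hm0 : q z.1 * q z.2 ≠ 0 := mul_ne_zero h1 h2
  have hmt : q z.1 * q z.2 ≠ ∞ := ENNReal.mul_ne_top (hqt z.1) (hqt z.2)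
  have hz' : (q z.1 * q z.2) * 2 = (q z.1 * q z.2) * (φ z.1 * (φ z.2)⁻¹ + φ z.2 * (φ z.1)⁻¹) := by
    rw [mul_comm _ (2:ℝ≥0∞)]; exact hz
  have hcancel : (2:ℝ≥0∞) = φ z.1 * (φ z.2)⁻¹ + φ z.2 * (φ z.1)⁻¹ := by
    have := congrArg (fun w => (q z.1 * q z.2)⁻¹ * w) hz'
    simpa [← mul_assoc, ENNReal.inv_mul_cancel hm0 hmt, one_mul] using this
  exact ennreal_eq_of_mul_inv_add (hφ0 z.1) (hφt z.1) (hφ0 z.2) (hφt z.2) hcancel.symm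

end CS

section Main

variable {X Y : Type*} [MeasurableSpace X] [MeasurableSpace Y]
    (μ : Measure X) (ν : Measure Y)
    [IsProbabilityMeasure μ] [IsProbabilityMeasure ν]
    (p : X → Y → ℝ≥0∞)

/-- The fundamental swap identity. -/
private lemma fortet_swap (hp_meas : Measurable (Function.uncurry p))
    (g : X → ℝ≥0∞) (hg : Measurable g) (h : Y → ℝ≥0∞) (hh : Measurable h) :
    ∫⁻ y, h y * ∫⁻ x, p x y * g x ∂μ ∂ν = ∫⁻ x, g x * ∫⁻ y, p x y * h y ∂ν ∂μ := by
  have hpy : ∀ y, Measurable fun x => p x y := fun y => hp_meas.comp measurable_prodMk_right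
  have hpx : ∀ x, Measurable fun y => p x y := fun x => hp_meas.comp measurable_prodMk_left
  have hm : AEMeasurable (Function.uncurry fun x y => p x y * g x * h y) (μ.prod ν) := by
    have : Measurable fun z : X × Y => p z.1 z.2 * g z.1 * h z.2 :=
      (hp_meas.mul (hg.comp measurable_fst)).mul (hh.comp measurable_snd)
    exact this.aemeasurable
  calc ∫⁻ y, h y * ∫⁻ x, p x y * g x ∂μ ∂ν
      = ∫⁻ y, ∫⁻ x, p x y * g x * h y ∂μ ∂ν := by
        refine lintegral_congr fun y => ?_
        rw [lintegral_mul_const _ (f := fun x => p x y * g x) ((hpy y).mul hg), mul_comm]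
    _ = ∫⁻ x, ∫⁻ y, p x y * g x * h y ∂ν ∂μ := (lintegral_lintegral_swap hm).symm
    _ = ∫⁻ x, g x * ∫⁻ y, p x y * h y ∂ν ∂μ := by
        refine lintegral_congr fun x => ?_
        have : ∀ y, p x y * g x * h y = g x * (p x y * h y) := fun y => by ring
        rw [lintegral_congr this, lintegral_const_mul _ (f := fun y => p x y * h y) ((hpx x).mul hh)]

/-- ν-a.e. finiteness and positivity of `Ψ[v]` for a fixed point `v`. -/
private lemma fortet_psi_good (hp_meas : Measurable (Function.uncurry p))
    (v : X → ℝ≥0∞) (hv : Measurable v) (hv0 : ∀ x, v x ≠ 0) (hvt : ∀ x, v x ≠ ∞)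
    (hfix : ∀ x, fortetPhi p μ ν v x = v x) :
    ∀ᵐ y ∂ν, fortetPsi p μ v y ≠ 0 ∧ fortetPsi p μ v y ≠ ∞ := by
  have hc_meas : Measurable (fortetPsi p μ v) := by
    apply Measurable.lintegral_prod_left (f := fun x y => p x y * (v x)⁻¹)
    exact hp_meas.mul ((hv.comp measurable_fst).inv)
  have h1 : ∫⁻ y, (fortetPsi p μ v y)⁻¹ * fortetPsi p μ v y ∂ν = 1 := by
    have hs := fortet_swap μ ν p hp_meas (fun x => (v x)⁻¹) hv.inv
      (fun y => (fortetPsi p μ v y)⁻¹) hc_meas.inv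
    calc ∫⁻ y, (fortetPsi p μ v y)⁻¹ * fortetPsi p μ v y ∂ν
        = ∫⁻ y, (fortetPsi p μ v y)⁻¹ * ∫⁻ x, p x y * (v x)⁻¹ ∂μ ∂ν := rfl
      _ = ∫⁻ x, (v x)⁻¹ * ∫⁻ y, p x y * (fortetPsi p μ v y)⁻¹ ∂ν ∂μ := hs
      _ = ∫⁻ x, (v x)⁻¹ * v x ∂μ := by
          refine lintegral_congr fun x => ?_
          rw [show (∫⁻ y, p x y * (fortetPsi p μ v y)⁻¹ ∂ν) = v x from hfix x]
      _ = 1 := by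
          rw [lintegral_congr fun x => ENNReal.inv_mul_cancel (hv0 x) (hvt x),
            lintegral_one, measure_univ]
  have hle : ∀ y, (fortetPsi p μ v y)⁻¹ * fortetPsi p μ v y ≤ 1 := by
    intro y
    rcases eq_or_ne (fortetPsi p μ v y) 0 with h | h
    · simp [h]
    rcases eq_or_ne (fortetPsi p μ v y) ∞ with h' | h'
    · simp [h']
    · rw [ENNReal.inv_mul_cancel h h']
  have heq := ae_eq_of_ae_le_of_lintegral_le (g := fun _ => (1:ℝ≥0∞)) (ae_of_all _ hle)
    (by rw [h1]; exact one_ne_top) aemeasurable_const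
    (by rw [h1, lintegral_one, measure_univ])
  filter_upwards [heq] with y hy
  constructor
  · intro h; rw [h] at hy; simp at hy
  · intro h; rw [h] at hy; simp at hy

end Main


theorem fortet_uniqueness
    {X Y : Type*} [MeasurableSpace X] [MeasurableSpace Y]
    (μ : Measure X) (ν : Measure Y)
    [IsProbabilityMeasure μ] [IsProbabilityMeasure ν]
    (p : X → Y → ℝ≥0∞)
    (hp_meas : Measurable (Function.uncurry p))
    (hp_fin : ∀ x y, p x y ≠ ∞)
    (U : X → ℝ≥0∞) (hU_meas : Measurable U)
    (hU_pos : ∀ x, 0 < U x) (hU_fin : ∀ x, U x ≠ ∞)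
    (hPhiU : ∀ᵐ x ∂μ, fortetPhi p μ ν U x < ∞)
    (hPsiU : ∀ᵐ y ∂ν, fortetPsi p μ U y < ∞)
    (hpos_ae : ∀ᵐ y ∂ν, 0 < μ {x | 0 < p x y})
    (hpos_all : 0 < μ {x | ∀ y, 0 < p x y})
    (u' u'' : X → ℝ≥0∞) (hu'_meas : Measurable u') (hu''_meas : Measurable u'')
    (hu'_pos : ∀ x, 0 < u' x) (hu'_le : ∀ x, u' x ≤ U x)
    (hu''_pos : ∀ x, 0 < u'' x) (hu''_le : ∀ x, u'' x ≤ U x)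
    (hu'_fix : ∀ x, fortetPhi p μ ν u' x = u' x)
    (hu''_fix : ∀ x, fortetPhi p μ ν u'' x = u'' x) :
    ∃ κ : ℝ≥0∞, 0 < κ ∧ κ ≠ ∞ ∧ ∀ x, u'' x = κ * u' x := by
  have hpy : ∀ y, Measurable fun x => p x y := fun y => hp_meas.comp measurable_prodMk_right
  have hpx : ∀ x, Measurable fun y => p x y := fun x => hp_meas.comp measurable_prodMk_left
  have hu't : ∀ x, u' x ≠ ∞ := fun x => ne_top_of_le_ne_top (hU_fin x) (hu'_le x)
  have hu''t : ∀ x, u'' x ≠ ∞ := fun x => ne_top_of_le_ne_top (hU_fin x) (hu''_le x)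
  have hu'0 : ∀ x, u' x ≠ 0 := fun x => (hu'_pos x).ne'
  have hu''0 : ∀ x, u'' x ≠ 0 := fun x => (hu''_pos x).ne'
  set a : Y → ℝ≥0∞ := fortetPsi p μ u' with ha_def
  set b : Y → ℝ≥0∞ := fortetPsi p μ u'' with hb_def
  set s : X → ℝ≥0∞ := fun x => u' x + u'' x with hs_def
  set φ : X → ℝ≥0∞ := fun x => u'' x * (s x)⁻¹ with hφ_def
  set ψ : X → ℝ≥0∞ := fun x => u' x * (s x)⁻¹ with hψ_def
  have ha_meas : Measurable a := by
    apply Measurable.lintegral_prod_left (f := fun x y => p x y * (u' x)⁻¹)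
    exact hp_meas.mul ((hu'_meas.comp measurable_fst).inv)
  have hb_meas : Measurable b := by
    apply Measurable.lintegral_prod_left (f := fun x y => p x y * (u'' x)⁻¹)
    exact hp_meas.mul ((hu''_meas.comp measurable_fst).inv)
  have hs_meas : Measurable s := hu'_meas.add hu''_meas
  have hφ_meas : Measurable φ := hu''_meas.mul hs_meas.inv
  have hψ_meas : Measurable ψ := hu'_meas.mul hs_meas.inv
  have hs0 : ∀ x, s x ≠ 0 := by
    intro x h
    rw [hs_def] at h
    exact hu'0 x (add_eq_zero.mp h).1
  have hst : ∀ x, s x ≠ ∞ := fun x => ENNReal.add_ne_top.mpr ⟨hu't x, hu''t x⟩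
  have hφ0 : ∀ x, φ x ≠ 0 := fun x =>
    mul_ne_zero (hu''0 x) (ENNReal.inv_ne_zero.mpr (hst x))
  have hφt : ∀ x, φ x ≠ ∞ :=
    fun x => ENNReal.mul_ne_top (hu''t x) (ENNReal.inv_ne_top.mpr (hs0 x))
  have hψ0 : ∀ x, ψ x ≠ 0 := fun x =>
    mul_ne_zero (hu'0 x) (ENNReal.inv_ne_zero.mpr (hst x))
  have hψt : ∀ x, ψ x ≠ ∞ :=
    fun x => ENNReal.mul_ne_top (hu't x) (ENNReal.inv_ne_top.mpr (hs0 x))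
  have hφψ : ∀ x, φ x + ψ x = 1 := by
    intro x
    rw [hφ_def, hψ_def]
    simp only
    rw [← add_mul, add_comm (u'' x) (u' x)]
    exact ENNReal.mul_inv_cancel (hs0 x) (hst x)
  -- inverse identities
  have hinv' : ∀ x, (u' x)⁻¹ * (φ x)⁻¹ = (u' x)⁻¹ + (u'' x)⁻¹ := by
    intro x
    have hφinv : (φ x)⁻¹ = (u'' x)⁻¹ * s x := by
      rw [hφ_def]
      simp only
      rw [ENNReal.mul_inv (Or.inl (hu''0 x)) (Or.inl (hu''t x)), inv_inv]
    rw [hφinv, hs_def]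
    simp only
    calc (u' x)⁻¹ * ((u'' x)⁻¹ * (u' x + u'' x))
        = (u'' x)⁻¹ * ((u' x)⁻¹ * u' x) + (u' x)⁻¹ * ((u'' x)⁻¹ * u'' x) := by ring
      _ = (u' x)⁻¹ + (u'' x)⁻¹ := by
          rw [ENNReal.inv_mul_cancel (hu'0 x) (hu't x),
            ENNReal.inv_mul_cancel (hu''0 x) (hu''t x), mul_one, mul_one, add_comm]
  have hinv'' : ∀ x, (u'' x)⁻¹ * (ψ x)⁻¹ = (u' x)⁻¹ + (u'' x)⁻¹ := by
    intro x
    have hψinv : (ψ x)⁻¹ = (u' x)⁻¹ * s x := by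
      rw [hψ_def]
      simp only
      rw [ENNReal.mul_inv (Or.inl (hu'0 x)) (Or.inl (hu't x)), inv_inv]
    rw [hψinv, hs_def]
    simp only
    calc (u'' x)⁻¹ * ((u' x)⁻¹ * (u' x + u'' x))
        = (u' x)⁻¹ * ((u'' x)⁻¹ * u'' x) + (u'' x)⁻¹ * ((u' x)⁻¹ * u' x) := by ring
      _ = (u' x)⁻¹ + (u'' x)⁻¹ := by
          rw [ENNReal.inv_mul_cancel (hu'0 x) (hu't x),
            ENNReal.inv_mul_cancel (hu''0 x) (hu''t x), mul_one, mul_one]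
  -- ∫ q (φ)⁻¹ = a + b and ∫ q'' (ψ)⁻¹ = a + b
  have hab : ∀ y, ∫⁻ x, p x y * (u' x)⁻¹ * (φ x)⁻¹ ∂μ = a y + b y := by
    intro y
    have h1 : ∀ x, p x y * (u' x)⁻¹ * (φ x)⁻¹
        = p x y * (u' x)⁻¹ + p x y * (u'' x)⁻¹ := by
      intro x; rw [mul_assoc, hinv' x, mul_add]
    rw [lintegral_congr h1, lintegral_add_left (f := fun x => p x y * (u' x)⁻¹) ((hpy y).mul hu'_meas.inv)]
    rfl
  have hab'' : ∀ y, ∫⁻ x, p x y * (u'' x)⁻¹ * (ψ x)⁻¹ ∂μ = a y + b y := by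
    intro y
    have h1 : ∀ x, p x y * (u'' x)⁻¹ * (ψ x)⁻¹
        = p x y * (u' x)⁻¹ + p x y * (u'' x)⁻¹ := by
      intro x; rw [mul_assoc, hinv'' x, mul_add]
    rw [lintegral_congr h1, lintegral_add_left (f := fun x => p x y * (u' x)⁻¹) ((hpy y).mul hu'_meas.inv)]
    rfl
  -- the two R functions
  set R : Y → ℝ≥0∞ := fun y => ∫⁻ x, p x y * ((u' x)⁻¹ * φ x) ∂μ with hR_def
  set R' : Y → ℝ≥0∞ := fun y => ∫⁻ x, p x y * ((u'' x)⁻¹ * ψ x) ∂μ with hR'_def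
  have hR_meas : Measurable R := by
    apply Measurable.lintegral_prod_left (f := fun x y => p x y * ((u' x)⁻¹ * φ x))
    exact hp_meas.mul (((hu'_meas.inv).mul hφ_meas).comp measurable_fst)
  have hR'_meas : Measurable R' := by
    apply Measurable.lintegral_prod_left (f := fun x y => p x y * ((u'' x)⁻¹ * ψ x))
    exact hp_meas.mul (((hu''_meas.inv).mul hψ_meas).comp measurable_fst)
  have hRy : ∀ y, ∫⁻ x, p x y * (u' x)⁻¹ * φ x ∂μ = R y :=
    fun y => lintegral_congr fun x => mul_assoc _ _ _
  have hR'y : ∀ y, ∫⁻ x, p x y * (u'' x)⁻¹ * ψ x ∂μ = R' y :=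
    fun y => lintegral_congr fun x => mul_assoc _ _ _
  -- Cauchy-Schwarz per y
  have hR_CS : ∀ y, a y * a y ≤ R y * (a y + b y) := by
    intro y
    have h := cs_ineq μ (fun x => p x y * (u' x)⁻¹) φ ((hpy y).mul hu'_meas.inv)
      hφ_meas hφ0 hφt
    rw [hRy y, hab y] at h
    exact h
  have hR'_CS : ∀ y, b y * b y ≤ R' y * (a y + b y) := by
    intro y
    have h := cs_ineq μ (fun x => p x y * (u'' x)⁻¹) ψ ((hpy y).mul hu''_meas.inv)
      hψ_meas hψ0 hψt
    rw [hR'y y, hab'' y] at h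
    exact h
  -- good sets
  have hgood' : ∀ᵐ y ∂ν, a y ≠ 0 ∧ a y ≠ ∞ :=
    fortet_psi_good μ ν p hp_meas u' hu'_meas hu'0 hu't hu'_fix
  have hgood'' : ∀ᵐ y ∂ν, b y ≠ 0 ∧ b y ≠ ∞ :=
    fortet_psi_good μ ν p hp_meas u'' hu''_meas hu''0 hu''t hu''_fix
  -- pointwise bound
  have hFK : ∀ᵐ y ∂ν, a y * (a y + b y)⁻¹ ≤ (a y)⁻¹ * R y := by
    filter_upwards [hgood', hgood''] with y ha' hb'
    obtain ⟨ha0, hat⟩ := ha'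
    obtain ⟨hb0, hbt⟩ := hb'
    have hab0 : a y + b y ≠ 0 := fun h => ha0 (add_eq_zero.mp h).1
    have habt : a y + b y ≠ ∞ := ENNReal.add_ne_top.mpr ⟨hat, hbt⟩
    calc a y * (a y + b y)⁻¹ = (a y)⁻¹ * (a y * a y) * (a y + b y)⁻¹ := by
          rw [← mul_assoc ((a y)⁻¹), ENNReal.inv_mul_cancel ha0 hat, one_mul]
      _ ≤ (a y)⁻¹ * (R y * (a y + b y)) * (a y + b y)⁻¹ :=
          mul_le_mul_left (mul_le_mul_right (hR_CS y) _) _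
      _ = (a y)⁻¹ * R y := by
          rw [mul_assoc ((a y)⁻¹), mul_assoc (R y), ENNReal.mul_inv_cancel hab0 habt,
            mul_one]
  have hGK : ∀ᵐ y ∂ν, b y * (a y + b y)⁻¹ ≤ (b y)⁻¹ * R' y := by
    filter_upwards [hgood', hgood''] with y ha' hb'
    obtain ⟨ha0, hat⟩ := ha'
    obtain ⟨hb0, hbt⟩ := hb'
    have hab0 : a y + b y ≠ 0 := fun h => ha0 (add_eq_zero.mp h).1
    have habt : a y + b y ≠ ∞ := ENNReal.add_ne_top.mpr ⟨hat, hbt⟩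
    calc b y * (a y + b y)⁻¹ = (b y)⁻¹ * (b y * b y) * (a y + b y)⁻¹ := by
          rw [← mul_assoc ((b y)⁻¹), ENNReal.inv_mul_cancel hb0 hbt, one_mul]
      _ ≤ (b y)⁻¹ * (R' y * (a y + b y)) * (a y + b y)⁻¹ :=
          mul_le_mul_left (mul_le_mul_right (hR'_CS y) _) _
      _ = (b y)⁻¹ * R' y := by
          rw [mul_assoc ((b y)⁻¹), mul_assoc (R' y), ENNReal.mul_inv_cancel hab0 habt,
            mul_one]
  -- swap identities
  have hK : ∫⁻ y, (a y)⁻¹ * R y ∂ν = ∫⁻ x, φ x ∂μ := by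
    have hs := fortet_swap μ ν p hp_meas (fun x => (u' x)⁻¹ * φ x)
      (hu'_meas.inv.mul hφ_meas) (fun y => (a y)⁻¹) ha_meas.inv
    calc ∫⁻ y, (a y)⁻¹ * R y ∂ν
        = ∫⁻ x, ((u' x)⁻¹ * φ x) * ∫⁻ y, p x y * (a y)⁻¹ ∂ν ∂μ := hs
      _ = ∫⁻ x, ((u' x)⁻¹ * φ x) * u' x ∂μ := by
          refine lintegral_congr fun x => ?_
          rw [show (∫⁻ y, p x y * (a y)⁻¹ ∂ν) = u' x from hu'_fix x]
      _ = ∫⁻ x, φ x ∂μ := by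
          refine lintegral_congr fun x => ?_
          rw [mul_comm ((u' x)⁻¹) (φ x), mul_assoc, ENNReal.inv_mul_cancel (hu'0 x) (hu't x),
            mul_one]
  have hK' : ∫⁻ y, (b y)⁻¹ * R' y ∂ν = ∫⁻ x, ψ x ∂μ := by
    have hs := fortet_swap μ ν p hp_meas (fun x => (u'' x)⁻¹ * ψ x)
      (hu''_meas.inv.mul hψ_meas) (fun y => (b y)⁻¹) hb_meas.inv
    calc ∫⁻ y, (b y)⁻¹ * R' y ∂ν
        = ∫⁻ x, ((u'' x)⁻¹ * ψ x) * ∫⁻ y, p x y * (b y)⁻¹ ∂ν ∂μ := hs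
      _ = ∫⁻ x, ((u'' x)⁻¹ * ψ x) * u'' x ∂μ := by
          refine lintegral_congr fun x => ?_
          rw [show (∫⁻ y, p x y * (b y)⁻¹ ∂ν) = u'' x from hu''_fix x]
      _ = ∫⁻ x, ψ x ∂μ := by
          refine lintegral_congr fun x => ?_
          rw [mul_comm ((u'' x)⁻¹) (ψ x), mul_assoc,
            ENNReal.inv_mul_cancel (hu''0 x) (hu''t x), mul_one]
  -- sums equal one
  have hJ : ∫⁻ x, φ x ∂μ + ∫⁻ x, ψ x ∂μ = 1 := by
    rw [← lintegral_add_left hφ_meas, lintegral_congr hφψ, lintegral_one, measure_univ]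
  have hFG : ∫⁻ y, a y * (a y + b y)⁻¹ ∂ν + ∫⁻ y, b y * (a y + b y)⁻¹ ∂ν = 1 := by
    rw [← lintegral_add_left (f := fun y => a y * (a y + b y)⁻¹) (ha_meas.mul (ha_meas.add hb_meas).inv)]
    have h1 : ∀ᵐ y ∂ν, a y * (a y + b y)⁻¹ + b y * (a y + b y)⁻¹ = 1 := by
      filter_upwards [hgood', hgood''] with y ha' hb'
      have hab0 : a y + b y ≠ 0 := fun h => ha'.1 (add_eq_zero.mp h).1
      have habt : a y + b y ≠ ∞ := ENNReal.add_ne_top.mpr ⟨ha'.2, hb'.2⟩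
      rw [← add_mul]
      exact ENNReal.mul_inv_cancel hab0 habt
    rw [lintegral_congr_ae h1, lintegral_one, measure_univ]
  -- derive the equalities
  have hF_le : ∫⁻ y, a y * (a y + b y)⁻¹ ∂ν ≤ ∫⁻ x, φ x ∂μ :=
    (lintegral_mono_ae hFK).trans hK.le
  have hG_le : ∫⁻ y, b y * (a y + b y)⁻¹ ∂ν ≤ ∫⁻ x, ψ x ∂μ :=
    (lintegral_mono_ae hGK).trans hK'.le
  have hψ_int_le : ∫⁻ x, ψ x ∂μ ≤ 1 := by
    rw [← hJ]; exact le_add_self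
  have hφ_int_le : ∫⁻ x, φ x ∂μ ≤ 1 := by
    rw [← hJ]; exact self_le_add_right _ _
  have hF_eq : ∫⁻ y, a y * (a y + b y)⁻¹ ∂ν = ∫⁻ x, φ x ∂μ := by
    by_contra h
    have hlt : ∫⁻ y, a y * (a y + b y)⁻¹ ∂ν < ∫⁻ x, φ x ∂μ := lt_of_le_of_ne hF_le h
    have hne : ∫⁻ y, b y * (a y + b y)⁻¹ ∂ν ≠ ∞ :=
      (hG_le.trans hψ_int_le).trans_lt one_lt_top |>.ne
    have := ENNReal.add_lt_add_of_lt_of_le hne hlt hG_le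
    rw [hFG, hJ] at this
    exact lt_irrefl _ this
  -- upgrade to a.e. equality of integrands
  have hKF : ∫⁻ y, (a y)⁻¹ * R y ∂ν = ∫⁻ y, a y * (a y + b y)⁻¹ ∂ν := by
    rw [hK, hF_eq]
  have hF_fin : ∫⁻ y, a y * (a y + b y)⁻¹ ∂ν ≠ ∞ := by
    rw [hF_eq]
    exact (hφ_int_le.trans_lt one_lt_top).ne
  have heq_ae : (fun y => a y * (a y + b y)⁻¹) =ᵐ[ν] fun y => (a y)⁻¹ * R y :=
    ae_eq_of_ae_le_of_lintegral_le hFK hF_fin (ha_meas.inv.mul hR_meas).aemeasurable hKF.le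
  -- Cauchy-Schwarz equality a.e.
  have hRab : ∀ᵐ y ∂ν, R y * (a y + b y) = a y * a y := by
    filter_upwards [heq_ae, hgood', hgood''] with y heq ha' hb'
    obtain ⟨ha0, hat⟩ := ha'
    obtain ⟨hb0, hbt⟩ := hb'
    have hab0 : a y + b y ≠ 0 := fun h => ha0 (add_eq_zero.mp h).1
    have habt : a y + b y ≠ ∞ := ENNReal.add_ne_top.mpr ⟨hat, hbt⟩
    have hR_eq : R y = a y * (a y * (a y + b y)⁻¹) := by
      calc R y = (a y * (a y)⁻¹) * R y := by
            rw [ENNReal.mul_inv_cancel ha0 hat, one_mul]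
        _ = a y * ((a y)⁻¹ * R y) := by rw [mul_assoc]
        _ = a y * (a y * (a y + b y)⁻¹) := by rw [← heq]
    calc R y * (a y + b y) = a y * a y * ((a y + b y)⁻¹ * (a y + b y)) := by
          rw [hR_eq]; ring
      _ = a y * a y := by rw [ENNReal.inv_mul_cancel hab0 habt, mul_one]
  -- apply the equality case of Cauchy-Schwarz
  have hCSeq : ∀ᵐ y ∂ν, ∀ᵐ z ∂(μ.prod μ),
      p z.1 y = 0 ∨ p z.2 y = 0 ∨ φ z.1 = φ z.2 := by
    filter_upwards [hRab, hgood'] with y hR ha'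
    obtain ⟨ha0, hat⟩ := ha'
    have hqt : ∀ x, p x y * (u' x)⁻¹ ≠ ∞ :=
      fun x => ENNReal.mul_ne_top (hp_fin x y) (ENNReal.inv_ne_top.mpr (hu'0 x))
    have hfin : (∫⁻ x, p x y * (u' x)⁻¹ ∂μ) ≠ ∞ := hat
    have hle : (∫⁻ x, p x y * (u' x)⁻¹ * φ x ∂μ) * (∫⁻ x, p x y * (u' x)⁻¹ * (φ x)⁻¹ ∂μ)
        ≤ (∫⁻ x, p x y * (u' x)⁻¹ ∂μ) * (∫⁻ x, p x y * (u' x)⁻¹ ∂μ) := by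
      rw [hRy y, hab y, hR]
      exact le_of_eq rfl
    have hcs := cs_eq μ (fun x => p x y * (u' x)⁻¹) φ ((hpy y).mul hu'_meas.inv)
      hφ_meas hφ0 hφt hqt hfin hle
    filter_upwards [hcs] with z hz
    rcases hz with h | h | h
    · exact Or.inl ((mul_eq_zero.mp h).resolve_right (ENNReal.inv_ne_zero.mpr (hu't z.1)))
    · exact Or.inr (Or.inl ((mul_eq_zero.mp h).resolve_right
        (ENNReal.inv_ne_zero.mpr (hu't z.2))))
    · exact Or.inr (Or.inr h)
  have hae3 : ∀ᵐ y ∂ν, ∀ᵐ x ∂μ, ∀ᵐ x' ∂μ,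
      p x y ≠ 0 → p x' y ≠ 0 → φ x = φ x' := by
    filter_upwards [hCSeq] with y h
    filter_upwards [Measure.ae_ae_of_ae_prod h] with x hx
    filter_upwards [hx] with x' hx'
    intro hp1 hp2
    rcases hx' with h1 | h1 | h1
    · exact absurd h1 hp1
    · exact absurd h1 hp2
    · exact h1
  -- extraction of the constant
  have hexS : ∀ N : Set X, μ N = 0 → ∃ x, (∀ y, 0 < p x y) ∧ x ∉ N := by
    intro N hN
    by_contra hcon
    push_neg at hcon
    have hsub : {x | ∀ y, 0 < p x y} ⊆ N := fun x hx => hcon x hx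
    exact absurd (le_antisymm ((measure_mono hsub).trans hN.le) (zero_le)) hpos_all.ne'
  have hconst : ∀ y, (∀ᵐ x ∂μ, ∀ᵐ x' ∂μ, p x y ≠ 0 → p x' y ≠ 0 → φ x = φ x') →
      ∃ x₀, (∀ y', 0 < p x₀ y') ∧ ∀ᵐ x' ∂μ, p x' y ≠ 0 → φ x' = φ x₀ := by
    intro y hy
    rw [ae_iff] at hy
    obtain ⟨x₀, hx₀S, hx₀⟩ := hexS _ hy
    simp only [Set.mem_setOf_eq, not_not] at hx₀
    refine ⟨x₀, hx₀S, ?_⟩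
    filter_upwards [hx₀] with x' h'
    intro hp'
    exact (h' (hx₀S y).ne' hp').symm
  haveI : (ae ν).NeBot := ae_neBot.mpr (IsProbabilityMeasure.ne_zero ν)
  obtain ⟨y₀, hy₀⟩ := hae3.exists
  obtain ⟨x₀, hx₀S, hx₀⟩ := hconst y₀ hy₀
  set κ : ℝ≥0∞ := u'' x₀ * (u' x₀)⁻¹ with hκ_def
  have hκ0 : κ ≠ 0 := mul_ne_zero (hu''0 x₀) (ENNReal.inv_ne_zero.mpr (hu't x₀))
  have hκt : κ ≠ ∞ := ENNReal.mul_ne_top (hu''t x₀) (ENNReal.inv_ne_top.mpr (hu'0 x₀))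
  -- ratio lemma
  have hratio : ∀ x, φ x = φ x₀ → u'' x = κ * u' x := by
    intro x h
    rw [hφ_def] at h
    simp only at h
    have h1 : u'' x * s x₀ = u'' x₀ * s x := by
      calc u'' x * s x₀ = u'' x * (s x)⁻¹ * (s x * s x₀) := by
            rw [mul_assoc (u'' x), ← mul_assoc ((s x)⁻¹),
              ENNReal.inv_mul_cancel (hs0 x) (hst x), one_mul]
        _ = u'' x₀ * (s x₀)⁻¹ * (s x * s x₀) := by rw [h]
        _ = u'' x₀ * s x := by
            rw [mul_comm (s x) (s x₀), mul_assoc (u'' x₀), ← mul_assoc ((s x₀)⁻¹),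
              ENNReal.inv_mul_cancel (hs0 x₀) (hst x₀), one_mul]
    have h2 : u'' x * u' x₀ + u'' x * u'' x₀ = u'' x₀ * u' x + u'' x * u'' x₀ := by
      have e1 : u'' x * s x₀ = u'' x * u' x₀ + u'' x * u'' x₀ := by
        rw [hs_def]; simp only; ring
      have e2 : u'' x₀ * s x = u'' x₀ * u' x + u'' x * u'' x₀ := by
        rw [hs_def]; simp only; ring
      rw [← e1, ← e2, h1]
    have h3 : u'' x * u' x₀ = u'' x₀ * u' x :=
      (ENNReal.add_left_inj (ENNReal.mul_ne_top (hu''t x) (hu''t x₀))).mp h2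
    calc u'' x = u'' x * (u' x₀ * (u' x₀)⁻¹) := by
          rw [ENNReal.mul_inv_cancel (hu'0 x₀) (hu't x₀), mul_one]
      _ = (u'' x * u' x₀) * (u' x₀)⁻¹ := by rw [mul_assoc]
      _ = (u'' x₀ * u' x) * (u' x₀)⁻¹ := by rw [h3]
      _ = κ * u' x := by rw [hκ_def]; ring
  -- the uniform constant a.e. in y
  have huniform : ∀ᵐ y ∂ν, ∀ᵐ x ∂μ, p x y ≠ 0 → φ x = φ x₀ := by
    filter_upwards [hae3] with y hy
    obtain ⟨x₁, hx₁S, hx₁⟩ := hconst y hy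
    have hcomb := hx₁.and hx₀
    rw [ae_iff] at hcomb
    obtain ⟨x₂, hx₂S, hx₂⟩ := hexS _ hcomb
    simp only [Set.mem_setOf_eq, not_not, not_and_or] at hx₂
    push_neg at hx₂
    have h10 : φ x₁ = φ x₀ := (hx₂.1 (hx₂S y).ne').symm.trans (hx₂.2 (hx₂S y₀).ne')
    filter_upwards [hx₁] with x hx hp
    rw [hx hp, h10]
  -- b = κ⁻¹ * a a.e.
  have hb_eq : ∀ᵐ y ∂ν, b y = κ⁻¹ * a y := by
    filter_upwards [huniform] with y hy
    have hcongr : ∀ᵐ x ∂μ, p x y * (u'' x)⁻¹ = κ⁻¹ * (p x y * (u' x)⁻¹) := by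
      filter_upwards [hy] with x hx
      rcases eq_or_ne (p x y) 0 with hp | hp
      · simp [hp]
      · rw [hratio x (hx hp), ENNReal.mul_inv (Or.inl hκ0) (Or.inl hκt)]
        ring
    calc b y = ∫⁻ x, p x y * (u'' x)⁻¹ ∂μ := rfl
      _ = ∫⁻ x, κ⁻¹ * (p x y * (u' x)⁻¹) ∂μ := lintegral_congr_ae hcongr
      _ = κ⁻¹ * a y := by
          rw [lintegral_const_mul _ (f := fun x => p x y * (u' x)⁻¹) ((hpy y).mul hu'_meas.inv)]
          rfl
  -- conclusion
  refine ⟨κ, zero_lt_iff.mpr hκ0, hκt, fun x => ?_⟩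
  calc u'' x = ∫⁻ y, p x y * (b y)⁻¹ ∂ν := (hu''_fix x).symm
    _ = ∫⁻ y, κ * (p x y * (a y)⁻¹) ∂ν := by
        refine lintegral_congr_ae ?_
        filter_upwards [hb_eq] with y hy
        rw [hy, ENNReal.mul_inv (Or.inl (ENNReal.inv_ne_zero.mpr hκt))
          (Or.inl (ENNReal.inv_ne_top.mpr hκ0)), inv_inv]
        ring
    _ = κ * ∫⁻ y, p x y * (a y)⁻¹ ∂ν := lintegral_const_mul _ ((hpx x).mul ha_meas.inv)
    _ = κ * u' x := by rw [show (∫⁻ y, p x y * (a y)⁻¹ ∂ν) = u' x from hu'_fix x]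

end
end

section
/- Let U : X → (0,∞) be measurable and let (u_n) be the Fortet scheme. Then: (a) the sequence (u_n) is pointwise non-increasing, satisfies 0 < U(x)/n ≤ u_n(x) ≤ U(x) < ∞ for all n ≥ 1 and x ∈ X, and its pointwise limit u_* exists with 0 ≤ u_* ≤ U; (b) the sequence (Φ[u_n]) is pointwise non-increasing with Φ[u_{n+1}] ≤ Φ[u_n] ≤ Φ[U]; (c) if moreover Φ[U](x) < ∞ for μ-almost every x, then for every n ≥ 1, Φ[u_n] < ∞ μ-almost everywhere, lim_{n→∞} Φ[u_n](x) = Φ[u_*](x) for μ-almost every x, and u_* = min(Φ[u_*], U) ≤ Φ[u_*] ≤ Φ[U] < ∞ μ-almost everywhere. -/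
open MeasureTheory ENNReal Filter Topology

noncomputable section

/-- The Fortet scheme: `fortetSeq p μ ν U n` is `u_{n+1}`, i.e. `u₁ = U` and
`u_{n+1} = max (U/(n+1)) (min (Φ[u_n]) U)`. -/
def fortetSeq {X Y : Type*} [MeasurableSpace X] [MeasurableSpace Y]
    (p : X → Y → ℝ≥0∞) (μ : Measure X) (ν : Measure Y) (U : X → ℝ≥0∞) :
    ℕ → X → ℝ≥0∞
  | 0 => U
  | n + 1 => fun x =>
      max (U x / (n + 2)) (min (fortetPhi p μ ν (fortetSeq p μ ν U n) x) (U x))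

section FortetAux

variable {X Y : Type*} [MeasurableSpace X] [MeasurableSpace Y]
  {p : X → Y → ℝ≥0∞} {μ : Measure X} {ν : Measure Y}

lemma fortetPsi_anti {u v : X → ℝ≥0∞} (h : ∀ x, u x ≤ v x) (y : Y) :
    fortetPsi p μ v y ≤ fortetPsi p μ u y :=
  lintegral_mono fun x => mul_le_mul_right (ENNReal.inv_le_inv.mpr (h x)) _

lemma fortetPhi_mono {u v : X → ℝ≥0∞} (h : ∀ x, u x ≤ v x) (x : X) :
    fortetPhi p μ ν u x ≤ fortetPhi p μ ν v x :=
  lintegral_mono fun y => mul_le_mul_right (ENNReal.inv_le_inv.mpr (fortetPsi_anti h y)) _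

lemma fortetPsi_meas [SFinite μ] (hp : Measurable (Function.uncurry p)) {u : X → ℝ≥0∞}
    (hu : Measurable u) : Measurable (fortetPsi p μ u) :=
  Measurable.lintegral_prod_left
    (f := fun x y => p x y * (u x)⁻¹)
    ((hp.comp measurable_id).mul ((hu.comp measurable_fst).inv))

lemma fortetPhi_meas [SFinite μ] [SFinite ν] (hp : Measurable (Function.uncurry p))
    {u : X → ℝ≥0∞} (hu : Measurable u) : Measurable (fortetPhi p μ ν u) :=
  Measurable.lintegral_prod_right
    (f := fun x y => p x y * (fortetPsi p μ u y)⁻¹)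
    ((hp.comp measurable_id).mul
      (((fortetPsi_meas hp hu).comp measurable_snd).inv))

end FortetAux

theorem fortet_scheme_convergence
    {X Y : Type*} [MeasurableSpace X] [MeasurableSpace Y]
    (μ : Measure X) (ν : Measure Y)
    [IsProbabilityMeasure μ] [IsProbabilityMeasure ν]
    (p : X → Y → ℝ≥0∞)
    (hp_meas : Measurable (Function.uncurry p))
    (hp_fin : ∀ x y, p x y ≠ ∞)
    (U : X → ℝ≥0∞) (hU_meas : Measurable U)
    (hU_pos : ∀ x, 0 < U x) (hU_fin : ∀ x, U x ≠ ∞) :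
    -- (a) the scheme is pointwise non-increasing and pinched between U/n and U
    (∀ n x, fortetSeq p μ ν U (n + 1) x ≤ fortetSeq p μ ν U n x) ∧
    (∀ (n : ℕ) (x : X), 0 < U x / (n + 1) ∧ U x / (n + 1) ≤ fortetSeq p μ ν U n x ∧
      fortetSeq p μ ν U n x ≤ U x ∧ U x < ∞) ∧
    ∃ ustar : X → ℝ≥0∞,
      (∀ x, Tendsto (fun n => fortetSeq p μ ν U n x) atTop (𝓝 (ustar x))) ∧
      (∀ x, ustar x ≤ U x) ∧
      -- (b) (Φ[u_n]) is pointwise non-increasing, bounded above by Φ[U]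
      (∀ n x, fortetPhi p μ ν (fortetSeq p μ ν U (n + 1)) x ≤
          fortetPhi p μ ν (fortetSeq p μ ν U n) x ∧
        fortetPhi p μ ν (fortetSeq p μ ν U n) x ≤ fortetPhi p μ ν U x) ∧
      -- (c) under the additional assumption Φ[U] < ∞ μ-a.e.
      ((∀ᵐ x ∂μ, fortetPhi p μ ν U x < ∞) →
        (∀ n, ∀ᵐ x ∂μ, fortetPhi p μ ν (fortetSeq p μ ν U n) x < ∞) ∧
        (∀ᵐ x ∂μ, Tendsto (fun n => fortetPhi p μ ν (fortetSeq p μ ν U n) x) atTop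
          (𝓝 (fortetPhi p μ ν ustar x))) ∧
        (∀ᵐ x ∂μ, ustar x = min (fortetPhi p μ ν ustar x) (U x) ∧
          fortetPhi p μ ν ustar x ≤ fortetPhi p μ ν U x ∧
          fortetPhi p μ ν U x < ∞)) := by
  classical
  set seq := fortetSeq p μ ν U with hseq_def
  have hseq0 : seq 0 = U := rfl
  have hseqS : ∀ n,
      seq (n + 1) = fun x =>
        max (U x / (n + 2)) (min (fortetPhi p μ ν (seq n) x) (U x)) := fun n => rfl
  -- upper bound by U
  have h_le_U : ∀ n x, seq n x ≤ U x := by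
    intro n x
    cases n with
    | zero => exact le_rfl
    | succ n =>
      rw [hseqS n]
      refine max_le ?_ (min_le_right _ _)
      calc U x / (n + 2) ≤ U x / 1 :=
            ENNReal.div_le_div_left ((by norm_num : (1:ℝ≥0∞) ≤ 2).trans le_add_self) _
        _ = U x := by rw [div_one]
  -- antitone
  have h_anti : ∀ n, ∀ x, seq (n + 1) x ≤ seq n x := by
    intro n
    induction n with
    | zero => intro x; exact h_le_U 1 x
    | succ n ih =>
      intro x
      rw [hseqS (n + 1), hseqS n]
      refine max_le_max ?_ (min_le_min (fortetPhi_mono ih x) le_rfl)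
      refine ENNReal.div_le_div_left ?_ _
      push_cast
      exact add_le_add_left (self_le_add_right _ _) 2
  have h_anti' : ∀ x, Antitone fun n => seq n x := fun x =>
    antitone_nat_of_succ_le fun n => h_anti n x
  -- lower bound
  have h_lb : ∀ (n : ℕ) (x : X), U x / (n + 1) ≤ seq n x := by
    intro n x
    cases n with
    | zero => simpa [hseq0] using ENNReal.div_le_div_left (by norm_num) (U x)
    | succ n =>
      rw [hseqS n]
      refine le_trans (le_of_eq ?_) (le_max_left _ _)
      push_cast
      ring_nf
  -- measurability of the scheme
  have hseq_meas : ∀ n, Measurable (seq n) := by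
    intro n
    induction n with
    | zero => exact hU_meas
    | succ n ih =>
      rw [hseqS n]
      exact (hU_meas.div measurable_const).max
        ((fortetPhi_meas hp_meas ih).min hU_meas)
  -- the limit
  set ustar : X → ℝ≥0∞ := fun x => ⨅ n, seq n x with hustar_def
  have h_tendsto : ∀ x, Tendsto (fun n => seq n x) atTop (𝓝 (ustar x)) := fun x =>
    tendsto_atTop_iInf (h_anti' x)
  have hustar_le : ∀ x, ustar x ≤ U x := fun x => (iInf_le _ 0).trans (le_of_eq rfl)
  have hustar_le_seq : ∀ n x, ustar x ≤ seq n x := fun n x => iInf_le _ n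
  -- (b)
  have hb : ∀ n x, fortetPhi p μ ν (seq (n + 1)) x ≤ fortetPhi p μ ν (seq n) x ∧
      fortetPhi p μ ν (seq n) x ≤ fortetPhi p μ ν U x := fun n x =>
    ⟨fortetPhi_mono (h_anti n) x, fortetPhi_mono (fun x' => h_le_U n x') x⟩
  -- key : Ψ[seq n] ↑ Ψ[ustar]
  have hΨmono : ∀ y, Monotone fun n => fortetPsi p μ (seq n) y := fun y =>
    monotone_nat_of_le_succ fun n => fortetPsi_anti (h_anti n) y
  have hΨsup : ∀ y, (⨆ n, fortetPsi p μ (seq n) y) = fortetPsi p μ ustar y := by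
    intro y
    have hmeas : ∀ n, Measurable fun x' => p x' y * (seq n x')⁻¹ := fun n =>
      (hp_meas.comp measurable_prodMk_right).mul (hseq_meas n).inv
    have hmono : Monotone fun n (x' : X) => p x' y * (seq n x')⁻¹ := by
      intro n m hnm x'
      exact mul_le_mul_right (ENNReal.inv_le_inv.mpr (h_anti' x' hnm)) _
    calc (⨆ n, fortetPsi p μ (seq n) y)
        = ∫⁻ x', ⨆ n, p x' y * (seq n x')⁻¹ ∂μ := (lintegral_iSup hmeas hmono).symm
      _ = fortetPsi p μ ustar y := by
          refine lintegral_congr fun x' => ?_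
          rw [← ENNReal.mul_iSup, ← ENNReal.inv_iInf]
  -- convergence of Φ[seq n] at points where Φ[U] is finite
  have hΦanti : ∀ x, Antitone fun n => fortetPhi p μ ν (seq n) x := fun x =>
    antitone_nat_of_succ_le fun n => (hb n x).1
  have hΦtendsto : ∀ x, fortetPhi p μ ν U x ≠ ∞ →
      Tendsto (fun n => fortetPhi p μ ν (seq n) x) atTop (𝓝 (fortetPhi p μ ν ustar x)) := by
    intro x hx
    have hmeas : ∀ n, Measurable fun y => p x y * (fortetPsi p μ (seq n) y)⁻¹ := fun n =>
      (hp_meas.comp measurable_prodMk_left).mul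
        ((fortetPsi_meas hp_meas (hseq_meas n)).inv)
    have hanti : Antitone fun n (y : Y) => p x y * (fortetPsi p μ (seq n) y)⁻¹ := by
      intro n m hnm y
      exact mul_le_mul_right (ENNReal.inv_le_inv.mpr (hΨmono y hnm)) _
    have hfin0 : ∫⁻ y, p x y * (fortetPsi p μ (seq 0) y)⁻¹ ∂ν ≠ ∞ := hx
    have hkey : (⨅ n, fortetPhi p μ ν (seq n) x) = fortetPhi p μ ν ustar x := by
      calc (⨅ n, fortetPhi p μ ν (seq n) x)
          = ∫⁻ y, ⨅ n, p x y * (fortetPsi p μ (seq n) y)⁻¹ ∂ν :=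
            (lintegral_iInf hmeas hanti hfin0).symm
        _ = fortetPhi p μ ν ustar x := by
            refine lintegral_congr fun y => ?_
            rw [← ENNReal.mul_iInf' (by simp [hp_fin x y]) (fun _ => inferInstance),
              ← ENNReal.inv_iSup, hΨsup y]
    exact hkey ▸ tendsto_atTop_iInf (hΦanti x)
  refine ⟨h_anti, ?_, ustar, h_tendsto, hustar_le, hb, ?_⟩
  · intro n x
    exact ⟨ENNReal.div_pos (hU_pos x).ne' (by simp), h_lb n x, h_le_U n x,
      lt_of_le_of_ne le_top (hU_fin x)⟩
  · intro hfin
    refine ⟨fun n => hfin.mono fun x hx => lt_of_le_of_lt ((hb n x).2) hx,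
      hfin.mono fun x hx => hΦtendsto x hx.ne, hfin.mono fun x hx => ?_⟩
    refine ⟨?_, fortetPhi_mono hustar_le x, hx⟩
    -- fixed point identity
    have hdiv : Tendsto (fun n : ℕ => U x / ((n : ℝ≥0∞) + 2)) atTop (𝓝 0) := by
      have h0 : Tendsto (fun n : ℕ => U x * ((n : ℝ≥0∞))⁻¹) atTop (𝓝 0) := by
        have := ENNReal.Tendsto.const_mul (a := U x) ENNReal.tendsto_inv_nat_nhds_zero
          (Or.inr (hU_fin x))
        simpa using this
      refine tendsto_of_tendsto_of_tendsto_of_le_of_le tendsto_const_nhds h0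
        (fun n => zero_le) fun n => ?_
      rw [div_eq_mul_inv]
      exact mul_le_mul_right (ENNReal.inv_le_inv.mpr (le_add_of_nonneg_right zero_le)) _
    have h1 : Tendsto (fun n => seq (n + 1) x) atTop (𝓝 (ustar x)) :=
      (h_tendsto x).comp (tendsto_add_atTop_nat 1)
    have h2 : Tendsto (fun n => seq (n + 1) x) atTop
        (𝓝 (max 0 (min (fortetPhi p μ ν ustar x) (U x)))) := by
      have := Tendsto.max hdiv
        (Tendsto.min (hΦtendsto x hx.ne) (tendsto_const_nhds (x := U x)))
      simpa [hseqS] using this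
    have := tendsto_nhds_unique h1 h2
    simpa using this

end
end

section
/- Let U : X → (0,∞) be measurable. Assume μ({x : p(x,y) > 0}) > 0 for ν-almost every y, and Ψ[U](y) < ∞ for ν-almost every y. Then for any measurable function u with 0 ≤ u ≤ U, one has ∫_{{x : Φ[u](x) > 0}} (Φ[u](x)/u(x)) dμ(x) = ν({y : Ψ[u](y) < ∞}). -/
open MeasureTheory ENNReal Filter Topology

noncomputable section

theorem fortet_key_identity
    {X Y : Type*} [MeasurableSpace X] [MeasurableSpace Y]
    (μ : Measure X) (ν : Measure Y)
    [IsProbabilityMeasure μ] [IsProbabilityMeasure ν]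
    (p : X → Y → ℝ≥0∞)
    (hp_meas : Measurable (Function.uncurry p))
    (hp_fin : ∀ x y, p x y ≠ ∞)
    (U : X → ℝ≥0∞) (hU_meas : Measurable U)
    (hU_pos : ∀ x, 0 < U x) (hU_fin : ∀ x, U x ≠ ∞)
    (hpos_ae : ∀ᵐ y ∂ν, 0 < μ {x | 0 < p x y})
    (hPsiU : ∀ᵐ y ∂ν, fortetPsi p μ U y < ∞)
    (u : X → ℝ≥0∞) (hu_meas : Measurable u) (hu_le : ∀ x, u x ≤ U x) :
    ∫⁻ x in {x | 0 < fortetPhi p μ ν u x}, fortetPhi p μ ν u x / u x ∂μ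
      = ν {y | fortetPsi p μ u y < ∞} := by
  set ψ : Y → ℝ≥0∞ := fortetPsi p μ u with hψdef
  set Φ : X → ℝ≥0∞ := fortetPhi p μ ν u with hΦdef
  -- measurability of ψ
  have hf_meas : Measurable (fun z : X × Y => p z.1 z.2 * (u z.1)⁻¹) :=
    hp_meas.mul ((hu_meas.comp measurable_fst).inv)
  have hψm : Measurable ψ := by
    have := Measurable.lintegral_prod_left' (μ := μ) hf_meas
    exact this
  have hgm : Measurable (fun z : X × Y => p z.1 z.2 * (ψ z.2)⁻¹) :=
    hp_meas.mul ((hψm.comp measurable_snd).inv)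
  have hΦm : Measurable Φ := by
    have := Measurable.lintegral_prod_right' (ν := ν) hgm
    exact this
  -- u x ≠ ∞
  have hu_fin : ∀ x, u x ≠ ∞ := fun x => ne_top_of_le_ne_top (hU_fin x) (hu_le x)
  -- step 1: set integral = full integral
  have h1 : ∫⁻ x in {x | 0 < Φ x}, Φ x / u x ∂μ = ∫⁻ x, Φ x * (u x)⁻¹ ∂μ := by
    simp only [div_eq_mul_inv]
    rw [← lintegral_indicator (measurableSet_lt measurable_const hΦm) (fun x => Φ x * (u x)⁻¹)]
    congr 1
    ext x
    rw [Set.indicator_apply]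
    by_cases h : 0 < Φ x
    · simp [h]
    · have : Φ x = 0 := by simpa [pos_iff_ne_zero] using h
      simp [h, this]
  rw [h1]
  -- step 2: express as double integral and swap
  have h2 : ∫⁻ x, Φ x * (u x)⁻¹ ∂μ
      = ∫⁻ y, (ψ y)⁻¹ * ∫⁻ x, p x y * (u x)⁻¹ ∂μ ∂ν := by
    have hx : ∀ x, Φ x * (u x)⁻¹ = ∫⁻ y, p x y * (ψ y)⁻¹ * (u x)⁻¹ ∂ν := by
      intro x
      rw [hΦdef, fortetPhi, ← lintegral_mul_const _ (by
        exact (hp_meas.comp (measurable_prodMk_left)).mul hψm.inv)]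
    simp_rw [hx]
    rw [lintegral_lintegral_swap]
    · congr 1
      ext y
      rw [← lintegral_const_mul _ (by
          exact (hp_meas.comp (measurable_prodMk_right)).mul hu_meas.inv)]
      congr 1
      ext x
      ring
    · exact ((hp_meas.mul ((hψm.comp measurable_snd).inv)).mul
        ((hu_meas.comp measurable_fst).inv)).aemeasurable
  rw [h2]
  -- a.e. ψ y ≠ 0
  have hψ_ne : ∀ᵐ y ∂ν, ψ y ≠ 0 := by
    filter_upwards [hpos_ae] with y hy
    have hpy : Measurable (fun x => p x y) := hp_meas.comp (measurable_prodMk_right)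
    rw [hψdef, fortetPsi, ← pos_iff_ne_zero,
      lintegral_pos_iff_support (f := fun x => p x y * (u x)⁻¹) (hpy.mul hu_meas.inv)]
    refine lt_of_lt_of_le hy (measure_mono ?_)
    intro x hx
    have h1 : p x y ≠ 0 := ne_of_gt hx
    have h2 : (u x)⁻¹ ≠ 0 := ENNReal.inv_ne_zero.mpr (hu_fin x)
    exact mul_ne_zero h1 h2
  -- step 3: compute the y-integral
  have h3 : ∫⁻ y, (ψ y)⁻¹ * ∫⁻ x, p x y * (u x)⁻¹ ∂μ ∂ν
      = ∫⁻ y, ({y | ψ y < ∞} : Set Y).indicator 1 y ∂ν := by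
    refine lintegral_congr_ae ?_
    filter_upwards [hψ_ne] with y hy0
    have : (∫⁻ x, p x y * (u x)⁻¹ ∂μ) = ψ y := rfl
    rw [this, Set.indicator_apply]
    by_cases hfin : ψ y < ∞
    · simp only [hfin, if_pos, Set.mem_setOf_eq]
      simp [ENNReal.inv_mul_cancel hy0 hfin.ne]
    · have : ψ y = ∞ := by simpa [lt_top_iff_ne_top, not_not] using hfin
      simp [hfin, this]
  rw [h3, lintegral_indicator_one (measurableSet_lt hψm measurable_const)]
end
end

section
/- Let U : X → (0,∞) be measurable. Assume: Φ[U](x) < ∞ for μ-almost every x; Ψ[U](y) < ∞ for ν-almost every y; and μ({x : p(x,y) > 0}) > 0 for ν-almost every y. Then any measurable function u : X → (0,∞) such that c⁻¹·U ≤ u ≤ c·U for some finite c ≥ 1 satisfies ∫_X (Φ[u](x)/u(x)) dμ(x) = 1. -/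
open MeasureTheory ENNReal Filter Topology

noncomputable section

theorem fortet_integral_one
    {X Y : Type*} [MeasurableSpace X] [MeasurableSpace Y]
    (μ : Measure X) (ν : Measure Y)
    [IsProbabilityMeasure μ] [IsProbabilityMeasure ν]
    (p : X → Y → ℝ≥0∞)
    (hp_meas : Measurable (Function.uncurry p))
    (hp_fin : ∀ x y, p x y ≠ ∞)
    (U : X → ℝ≥0∞) (hU_meas : Measurable U)
    (hU_pos : ∀ x, 0 < U x) (hU_fin : ∀ x, U x ≠ ∞)
    (hPhiU : ∀ᵐ x ∂μ, fortetPhi p μ ν U x < ∞)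
    (hPsiU : ∀ᵐ y ∂ν, fortetPsi p μ U y < ∞)
    (hpos_ae : ∀ᵐ y ∂ν, 0 < μ {x | 0 < p x y})
    (u : X → ℝ≥0∞) (hu_meas : Measurable u)
    (hu_pos : ∀ x, 0 < u x) (hu_fin : ∀ x, u x ≠ ∞)
    (c : ℝ≥0∞) (hc_one : 1 ≤ c) (hc_fin : c ≠ ∞)
    (hu_bound : ∀ x, c⁻¹ * U x ≤ u x ∧ u x ≤ c * U x) :
    ∫⁻ x, fortetPhi p μ ν u x / u x ∂μ = 1 := by
  have hc_ne : c ≠ 0 := fun h => by simp [h] at hc_one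
  set Ψ : Y → ℝ≥0∞ := fortetPsi p μ u with hΨdef
  -- measurability of integrand in x for fixed y
  have hpu_meas : ∀ y, Measurable (fun x => p x y * (u x)⁻¹) := fun y =>
    (hp_meas.comp (measurable_id.prodMk measurable_const)).mul hu_meas.inv
  have hΨ_meas : Measurable Ψ := by
    have : Measurable (Function.uncurry fun y x => p x y * (u x)⁻¹) :=
      (hp_meas.comp measurable_swap).mul ((hu_meas.comp measurable_snd).inv)
    exact this.lintegral_prod_right'
  have hΨ_pos : ∀ᵐ y ∂ν, 0 < Ψ y := by
    filter_upwards [hpos_ae] with y hy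
    rw [pos_iff_ne_zero]
    intro h0
    rw [hΨdef, fortetPsi, lintegral_eq_zero_iff (hpu_meas y)] at h0
    have : μ {x | 0 < p x y} = 0 := by
      refine measure_mono_null ?_ h0
      intro x hx
      simp only [Set.mem_setOf_eq, Pi.zero_apply] at hx ⊢
      exact fun h => by
        rcases mul_eq_zero.mp h with h | h
        · exact absurd h hx.ne'
        · exact (ENNReal.inv_ne_zero.mpr (hu_fin x)) h
    simp [this] at hy
  have hΨ_fin : ∀ᵐ y ∂ν, Ψ y < ∞ := by
    filter_upwards [hPsiU] with y hy
    have hle : Ψ y ≤ c * fortetPsi p μ U y := by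
      have hm : Measurable (fun x => p x y * (U x)⁻¹) :=
        (hp_meas.comp (measurable_id.prodMk measurable_const)).mul hU_meas.inv
      rw [hΨdef, fortetPsi, fortetPsi, ← lintegral_const_mul c hm]
      refine lintegral_mono fun x => ?_
      have h1 : (u x)⁻¹ ≤ (c⁻¹ * U x)⁻¹ := ENNReal.inv_le_inv.mpr (hu_bound x).1
      rw [ENNReal.mul_inv (Or.inl (ENNReal.inv_ne_zero.mpr hc_fin))
        (Or.inl (ENNReal.inv_ne_top.mpr hc_ne)), inv_inv] at h1
      calc p x y * (u x)⁻¹ ≤ p x y * (c * (U x)⁻¹) := by gcongr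
        _ = c * (p x y * (U x)⁻¹) := by ring
    exact lt_of_le_of_lt hle (ENNReal.mul_lt_top hc_fin.lt_top hy)
  have key : ∫⁻ x, fortetPhi p μ ν u x / u x ∂μ
      = ∫⁻ y, (Ψ y)⁻¹ * Ψ y ∂ν := by
    have h1 : ∀ x, fortetPhi p μ ν u x / u x
        = ∫⁻ y, p x y * (Ψ y)⁻¹ * (u x)⁻¹ ∂ν := by
      intro x
      rw [div_eq_mul_inv, fortetPhi,
        ← lintegral_mul_const' _ _ (ENNReal.inv_ne_top.mpr (hu_pos x).ne')]
    calc ∫⁻ x, fortetPhi p μ ν u x / u x ∂μ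
        = ∫⁻ x, ∫⁻ y, p x y * (Ψ y)⁻¹ * (u x)⁻¹ ∂ν ∂μ := by
          exact lintegral_congr h1
      _ = ∫⁻ y, ∫⁻ x, p x y * (Ψ y)⁻¹ * (u x)⁻¹ ∂μ ∂ν := by
          refine lintegral_lintegral_swap ?_
          exact ((hp_meas.mul ((hΨ_meas.comp measurable_snd).inv)).mul
            ((hu_meas.comp measurable_fst).inv)).aemeasurable
      _ = ∫⁻ y, (Ψ y)⁻¹ * Ψ y ∂ν := by
          refine lintegral_congr fun y => ?_
          have : (fun x => p x y * (Ψ y)⁻¹ * (u x)⁻¹)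
              = fun x => (Ψ y)⁻¹ * (p x y * (u x)⁻¹) := by
            funext x; ring
          rw [this, lintegral_const_mul _ (hpu_meas y)]
          rfl
  rw [key]
  have : ∀ᵐ y ∂ν, (Ψ y)⁻¹ * Ψ y = 1 := by
    filter_upwards [hΨ_pos, hΨ_fin] with y h0 hfin
    exact ENNReal.inv_mul_cancel h0.ne' hfin.ne
  rw [lintegral_congr_ae this, lintegral_one, measure_univ]

end
end

section
/- Assume p(x,y) > 0 for all x ∈ X and y ∈ Y. Then for any measurable function u with 0 ≤ u ≤ U (U : X → (0,∞) measurable), the following dichotomy holds: either Φ[u](x) = 0 for all x ∈ X, or Φ[u](x) > 0 for all x ∈ X. -/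
open MeasureTheory ENNReal Filter Topology

noncomputable section

theorem fortet_dichotomy
    {X Y : Type*} [MeasurableSpace X] [MeasurableSpace Y]
    (μ : Measure X) (ν : Measure Y)
    [IsProbabilityMeasure μ] [IsProbabilityMeasure ν]
    (p : X → Y → ℝ≥0∞)
    (hp_meas : Measurable (Function.uncurry p))
    (hp_pos : ∀ x y, 0 < p x y)
    (U : X → ℝ≥0∞) (hU_meas : Measurable U)
    (hU_pos : ∀ x, 0 < U x) (hU_fin : ∀ x, U x ≠ ∞)
    (u : X → ℝ≥0∞) (hu_meas : Measurable u) (hu_le : ∀ x, u x ≤ U x) :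
    (∀ x, fortetPhi p μ ν u x = 0) ∨ (∀ x, 0 < fortetPhi p μ ν u x) := by
  have hΨ_meas : Measurable (fortetPsi p μ u) := by
    apply Measurable.lintegral_prod_left
    have : Measurable fun a : X × Y => p a.1 a.2 * (u a.1)⁻¹ :=
      hp_meas.mul ((hu_meas.comp measurable_fst).inv)
    exact this
  by_cases h : ν {y | fortetPsi p μ u y ≠ ∞} = 0
  · left
    intro x
    have hae : ∀ᵐ y ∂ν, p x y * (fortetPsi p μ u y)⁻¹ = 0 := by
      filter_upwards [measure_eq_zero_iff_ae_notMem.mp h] with y hy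
      simp only [Set.mem_setOf_eq, not_not] at hy
      simp [hy]
    simpa [fortetPhi] using lintegral_congr_ae hae
  · right
    intro x
    have hmeas : Measurable fun y => p x y * (fortetPsi p μ u y)⁻¹ := by
      have : Measurable fun y => p x y := hp_meas.comp (measurable_prodMk_left)
      exact this.mul hΨ_meas.inv
    rw [fortetPhi, lintegral_pos_iff_support hmeas]
    have hsub : {y | fortetPsi p μ u y ≠ ∞} ⊆
        Function.support fun y => p x y * (fortetPsi p μ u y)⁻¹ := by
      intro y hy
      simp only [Function.mem_support, ne_eq, mul_eq_zero, not_or]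
      exact ⟨(hp_pos x y).ne', ENNReal.inv_ne_zero.mpr hy⟩
    exact lt_of_lt_of_le (pos_iff_ne_zero.mpr h) (measure_mono hsub)
end
end

section
/- Suppose p(x,y) > 0 for all x ∈ X, y ∈ Y, sup_{x,y} p(x,y) < ∞, and ∫_Y (∫_X p(x,y) dμ(x))⁻¹ dν(y) < ∞. Let (u_n) be the Fortet scheme with U ≡ 1 and let u_* be its pointwise limit. If there exists x₀ ∈ X such that Φ[u_*](x₀) = 0, then the sequence (Φ[u_n]) converges uniformly to 0, i.e. lim_{n→∞} sup_{x∈X} Φ[u_n](x) = 0. -/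
open MeasureTheory ENNReal Filter Topology

noncomputable section

theorem fortet_uniform_convergence_to_zero
    {X Y : Type*} [MeasurableSpace X] [MeasurableSpace Y]
    (μ : Measure X) (ν : Measure Y)
    [IsProbabilityMeasure μ] [IsProbabilityMeasure ν]
    (p : X → Y → ℝ≥0∞)
    (hp_meas : Measurable (Function.uncurry p))
    (hp_pos : ∀ x y, 0 < p x y)
    (hp_bdd : (⨆ x, ⨆ y, p x y) < ∞)
    (hint : (∫⁻ y, (∫⁻ x, p x y ∂μ)⁻¹ ∂ν) < ∞)
    (ustar : X → ℝ≥0∞)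
    (hustar : ∀ x, Tendsto (fun n => fortetSeq p μ ν (fun _ => 1) n x) atTop (𝓝 (ustar x)))
    (x₀ : X) (hx₀ : fortetPhi p μ ν ustar x₀ = 0) :
    Tendsto (fun n => ⨆ x, fortetPhi p μ ν (fortetSeq p μ ν (fun _ => 1) n) x)
      atTop (𝓝 0) := by
  set U : X → ℝ≥0∞ := fun _ => 1 with hUdef
  set u : ℕ → X → ℝ≥0∞ := fortetSeq p μ ν U with hudef
  set M : ℝ≥0∞ := ⨆ x, ⨆ y, p x y with hMdef
  have hpM : ∀ x y, p x y ≤ M := fun x y => le_iSup_of_le x (le_iSup (fun y => p x y) y)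
  -- measurability of Ψ and Φ
  have hΨmeas : ∀ v : X → ℝ≥0∞, Measurable v → Measurable (fortetPsi p μ v) := by
    intro v hv
    have h : Measurable fun q : X × Y => p q.1 q.2 * (v q.1)⁻¹ :=
      hp_meas.mul ((hv.comp measurable_fst).inv)
    exact h.lintegral_prod_left'
  have hΦmeas : ∀ v : X → ℝ≥0∞, Measurable v → Measurable (fortetPhi p μ ν v) := by
    intro v hv
    have h : Measurable fun q : X × Y => p q.1 q.2 * (fortetPsi p μ v q.2)⁻¹ :=
      hp_meas.mul (((hΨmeas v hv).comp measurable_snd).inv)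
    exact h.lintegral_prod_right'
  have humeas : ∀ n, Measurable (u n) := by
    intro n
    induction n with
    | zero => exact measurable_const
    | succ n ih =>
      exact Measurable.max (measurable_const.div measurable_const) ((hΦmeas _ ih).min measurable_const)
  have hule : ∀ n x, u n x ≤ 1 := by
    intro n x
    cases n with
    | zero => simp [hudef, fortetSeq, hUdef]
    | succ n =>
      show max (U x / (n + 2)) (min (fortetPhi p μ ν (u n) x) (U x)) ≤ 1
      refine max_le ?_ (le_trans (min_le_right _ _) le_rfl)
      simp only [hUdef]
      exact ENNReal.div_le_of_le_mul (by rw [one_mul]; exact one_le_two.trans le_add_self)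
  -- ustar is measurable
  have hustar_meas : Measurable ustar := by
    have : ustar = fun x => limsup (fun n => u n x) atTop :=
      funext fun x => ((hustar x).limsup_eq).symm
    rw [this]
    exact Measurable.limsup humeas
  -- Ψ[ustar] = ∞ a.e.
  have hmeasf : Measurable fun y => p x₀ y * (fortetPsi p μ ustar y)⁻¹ := by
    have : Measurable fun y => p x₀ y :=
      hp_meas.comp (measurable_const.prodMk measurable_id)
    exact this.mul (hΨmeas ustar hustar_meas).inv
  have haeinf : ∀ᵐ y ∂ν, fortetPsi p μ ustar y = ∞ := by
    have h0 : ∫⁻ y, p x₀ y * (fortetPsi p μ ustar y)⁻¹ ∂ν = 0 := hx₀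
    have hae := (lintegral_eq_zero_iff hmeasf).mp h0
    filter_upwards [hae] with y hy
    rcases mul_eq_zero.mp hy with h | h
    · exact absurd h (hp_pos x₀ y).ne'
    · exact ENNReal.inv_eq_zero.mp h
  -- a.e. y, Ψ[u n] y → ∞ and so inverses → 0
  have htend0 : ∀ᵐ y ∂ν, Tendsto (fun n => (fortetPsi p μ (u n) y)⁻¹) atTop (𝓝 0) := by
    filter_upwards [haeinf] with y hy
    have hpt : ∀ x, Tendsto (fun n => p x y * (u n x)⁻¹) atTop (𝓝 (p x y * (ustar x)⁻¹)) := by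
      intro x
      exact ENNReal.Tendsto.const_mul (ENNReal.tendsto_inv_iff.2 (hustar x))
        (Or.inr ((hpM x y).trans_lt hp_bdd).ne)
    have hliminf : liminf (fun n => fortetPsi p μ (u n) y) atTop = ∞ := by
      refine top_le_iff.mp ?_
      calc (∞ : ℝ≥0∞) = fortetPsi p μ ustar y := hy.symm
        _ = ∫⁻ x, liminf (fun n => p x y * (u n x)⁻¹) atTop ∂μ :=
            lintegral_congr fun x => ((hpt x).liminf_eq).symm
        _ ≤ liminf (fun n => ∫⁻ x, p x y * (u n x)⁻¹ ∂μ) atTop := by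
            refine lintegral_liminf_le fun n => ?_
            exact (hp_meas.comp (measurable_id.prodMk measurable_const)).mul (humeas n).inv
    have hlim : Tendsto (fun n => fortetPsi p μ (u n) y) atTop (𝓝 ∞) := by
      refine tendsto_of_liminf_eq_limsup hliminf ?_
      exact le_antisymm le_top (hliminf ▸ liminf_le_limsup)
    simpa using ENNReal.tendsto_inv_iff.2 hlim
  -- dominated convergence
  have hbound : ∀ n, (fun y => (fortetPsi p μ (u n) y)⁻¹) ≤ᵐ[ν] fun y => (∫⁻ x, p x y ∂μ)⁻¹ := by
    intro n
    refine Filter.Eventually.of_forall fun y => ?_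
    refine ENNReal.inv_le_inv' ?_
    refine lintegral_mono fun x => ?_
    calc p x y = p x y * 1 := (mul_one _).symm
      _ ≤ p x y * (u n x)⁻¹ :=
          mul_le_mul_right (ENNReal.one_le_inv.mpr (hule n x)) _
  have hdom : Tendsto (fun n => ∫⁻ y, (fortetPsi p μ (u n) y)⁻¹ ∂ν) atTop (𝓝 0) := by
    have := tendsto_lintegral_of_dominated_convergence (μ := ν)
      (F := fun n y => (fortetPsi p μ (u n) y)⁻¹) (f := fun _ => 0)
      (fun y => (∫⁻ x, p x y ∂μ)⁻¹)
      (fun n => (hΨmeas _ (humeas n)).inv) hbound hint.ne htend0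
    simpa using this
  -- squeeze
  have hbig : ∀ n, (⨆ x, fortetPhi p μ ν (u n) x) ≤ M * ∫⁻ y, (fortetPsi p μ (u n) y)⁻¹ ∂ν := by
    intro n
    refine iSup_le fun x => ?_
    calc fortetPhi p μ ν (u n) x
        ≤ ∫⁻ y, M * (fortetPsi p μ (u n) y)⁻¹ ∂ν :=
          lintegral_mono fun y => mul_le_mul_left (hpM x y) _
      _ = M * ∫⁻ y, (fortetPsi p μ (u n) y)⁻¹ ∂ν :=
          lintegral_const_mul M (hΨmeas _ (humeas n)).inv
  have hMdom : Tendsto (fun n => M * ∫⁻ y, (fortetPsi p μ (u n) y)⁻¹ ∂ν) atTop (𝓝 0) := by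
    have := ENNReal.Tendsto.const_mul (a := M) hdom (Or.inr hp_bdd.ne)
    simpa using this
  exact tendsto_of_tendsto_of_tendsto_of_le_of_le tendsto_const_nhds hMdom
    (fun n => zero_le) hbig

end
end

section
/- Let α : X → (0,∞) and β : Y → (0,∞) be measurable positive functions, and define the twisted transition density p̃(x,y) := α(x)·β(y)·p(x,y). Then a pair of σ-finite measures (a, b) solves the Schrödinger system for (p, μ, ν) if and only if the pair (ã, b̃) := (measure with density α⁻¹ with respect to a, measure with density β⁻¹ with respect to b) solves the Schrödinger system for (p̃, μ, ν). -/
open MeasureTheory ENNReal Filter Topology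

noncomputable section

/-- A pair `(a, b)` of σ-finite measures solves the Schrödinger system for `(p, μ, ν)`. -/
def IsSchrodingerSolution {X Y : Type*} [MeasurableSpace X] [MeasurableSpace Y]
    (p : X → Y → ℝ≥0∞) (μ : Measure X) (ν : Measure Y)
    (a : Measure X) (b : Measure Y) : Prop :=
  SigmaFinite a ∧ SigmaFinite b ∧
    μ = a.withDensity (fun x => ∫⁻ y, p x y ∂b) ∧
    ν = b.withDensity (fun y => ∫⁻ x, p x y ∂a)

lemma sigmaFinite_withDensity_inv_iff {X : Type*} [MeasurableSpace X]
    (α : X → ℝ≥0∞) (hα_meas : Measurable α)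
    (hα_pos : ∀ x, 0 < α x) (hα_fin : ∀ x, α x ≠ ∞) (a : Measure X) :
    SigmaFinite a ↔ SigmaFinite (a.withDensity (fun x => (α x)⁻¹)) := by
  constructor
  · intro h
    exact SigmaFinite.withDensity_of_ne_top' fun x => by
      simp [ENNReal.inv_ne_top, (hα_pos x).ne']
  · intro h
    have hcancel : (a.withDensity (fun x => (α x)⁻¹)).withDensity α = a := by
      have := withDensity_inv_same (μ := a) (f := fun x => (α x)⁻¹) hα_meas.inv
        (ae_of_all _ fun x => by simp [ENNReal.inv_ne_zero, hα_fin x])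
        (ae_of_all _ fun x => by simp [ENNReal.inv_ne_top, (hα_pos x).ne'])
      simpa using this
    rw [← hcancel]
    exact SigmaFinite.withDensity_of_ne_top' hα_fin

theorem fortet_twisting
    {X Y : Type*} [MeasurableSpace X] [MeasurableSpace Y]
    (μ : Measure X) (ν : Measure Y)
    [IsProbabilityMeasure μ] [IsProbabilityMeasure ν]
    (p : X → Y → ℝ≥0∞)
    (hp_meas : Measurable (Function.uncurry p))
    (α : X → ℝ≥0∞) (hα_meas : Measurable α)
    (hα_pos : ∀ x, 0 < α x) (hα_fin : ∀ x, α x ≠ ∞)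
    (β : Y → ℝ≥0∞) (hβ_meas : Measurable β)
    (hβ_pos : ∀ y, 0 < β y) (hβ_fin : ∀ y, β y ≠ ∞)
    (a : Measure X) (b : Measure Y) :
    IsSchrodingerSolution p μ ν a b ↔
      IsSchrodingerSolution (fun x y => α x * β y * p x y) μ ν
        (a.withDensity (fun x => (α x)⁻¹)) (b.withDensity (fun y => (β y)⁻¹)) := by
  have hpx : ∀ x, Measurable (p x) := fun x => hp_meas.of_uncurry_left
  have hpy : ∀ y, Measurable (fun x => p x y) := fun y => hp_meas.of_uncurry_right
  -- first marginal identity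
  have hX : ∀ (_ : SigmaFinite b), (a.withDensity (fun x => (α x)⁻¹)).withDensity
      (fun x => ∫⁻ y, α x * β y * p x y ∂(b.withDensity (fun y => (β y)⁻¹)))
      = a.withDensity (fun x => ∫⁻ y, p x y ∂b) := by
    intro hb
    have hint : ∀ x, (∫⁻ y, α x * β y * p x y ∂(b.withDensity (fun y => (β y)⁻¹)))
        = α x * ∫⁻ y, p x y ∂b := by
      intro x
      rw [lintegral_withDensity_eq_lintegral_mul _ (f := fun y => (β y)⁻¹) hβ_meas.inv
        (g := fun y => α x * β y * p x y) ((measurable_const.mul hβ_meas).mul (hpx x))]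
      rw [← lintegral_const_mul _ (hpx x)]
      congr 1 with y
      simp only [Pi.mul_apply]
      rw [show (β y)⁻¹ * (α x * β y * p x y) = ((β y)⁻¹ * β y) * (α x * p x y) by ring,
        ENNReal.inv_mul_cancel (hβ_pos y).ne' (hβ_fin y), one_mul]
    simp only [hint]
    have hF : Measurable (fun x => ∫⁻ y, p x y ∂b) :=
      Measurable.lintegral_prod_right hp_meas
    rw [← withDensity_mul _ (f := fun x => (α x)⁻¹) hα_meas.inv
      (g := fun x => α x * ∫⁻ y, p x y ∂b) (hα_meas.mul hF)]
    congr 1 with x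
    simp only [Pi.mul_apply]
    rw [← mul_assoc, ENNReal.inv_mul_cancel (hα_pos x).ne' (hα_fin x), one_mul]
  -- second marginal identity
  have hY : ∀ (_ : SigmaFinite a), (b.withDensity (fun y => (β y)⁻¹)).withDensity
      (fun y => ∫⁻ x, α x * β y * p x y ∂(a.withDensity (fun x => (α x)⁻¹)))
      = b.withDensity (fun y => ∫⁻ x, p x y ∂a) := by
    intro ha
    have hint : ∀ y, (∫⁻ x, α x * β y * p x y ∂(a.withDensity (fun x => (α x)⁻¹)))
        = β y * ∫⁻ x, p x y ∂a := by
      intro y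
      rw [lintegral_withDensity_eq_lintegral_mul _ (f := fun x => (α x)⁻¹) hα_meas.inv
        (g := fun x => α x * β y * p x y) ((hα_meas.mul measurable_const).mul (hpy y))]
      rw [← lintegral_const_mul _ (hpy y)]
      congr 1 with x
      simp only [Pi.mul_apply]
      rw [show (α x)⁻¹ * (α x * β y * p x y) = ((α x)⁻¹ * α x) * (β y * p x y) by ring,
        ENNReal.inv_mul_cancel (hα_pos x).ne' (hα_fin x), one_mul]
    simp only [hint]
    have hG : Measurable (fun y => ∫⁻ x, p x y ∂a) :=
      Measurable.lintegral_prod_left hp_meas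
    rw [← withDensity_mul _ (f := fun y => (β y)⁻¹) hβ_meas.inv
      (g := fun y => β y * ∫⁻ x, p x y ∂a) (hβ_meas.mul hG)]
    congr 1 with y
    simp only [Pi.mul_apply]
    rw [← mul_assoc, ENNReal.inv_mul_cancel (hβ_pos y).ne' (hβ_fin y), one_mul]
  constructor
  · rintro ⟨ha, hb, hμ, hν⟩
    refine ⟨(sigmaFinite_withDensity_inv_iff α hα_meas hα_pos hα_fin a).mp ha,
      (sigmaFinite_withDensity_inv_iff β hβ_meas hβ_pos hβ_fin b).mp hb, ?_, ?_⟩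
    · rw [hμ, ← hX hb]
    · rw [hν, ← hY ha]
  · rintro ⟨ha, hb, hμ, hν⟩
    have ha' := (sigmaFinite_withDensity_inv_iff α hα_meas hα_pos hα_fin a).mpr ha
    have hb' := (sigmaFinite_withDensity_inv_iff β hβ_meas hβ_pos hβ_fin b).mpr hb
    refine ⟨ha', hb', ?_, ?_⟩
    · rw [hμ, hX hb']
    · rw [hν, hY ha']

end
end
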